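/- For jointly distributed random variables where U_k → X(L) → Y_k forms a Markov chain for each k in D^c, the inequality T(U(K),X(L)) - T(U(D),X(L)) - Σ_{k∈D^c} I(U_k;Y_k) ≥ 0 holds, where T denotes total correlation T(X(S)) = Σ_{l∈S} H(X_l) - H(X(S)). -/

import Mathlib

open Finset

/-!
Entropic formalization: random variables are indexed by `Idx K L`
(`u k` = user auxiliary `U_k`, `x l` = BS signal `X_l`, `y k` = channel output `Y_k`).
`H` is the joint (Shannon) entropy function on finite sets of variables; it satisfies
the standard entropy axioms (normalized, monotone, submodular).  The Markov chain
`U_k → X(𝓛) → Y_k` is expressed as vanishing conditional mutual information.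
-/

abbrev Idx (K L : ℕ) := Fin K ⊕ (Fin L ⊕ Fin K)

def u {K L : ℕ} (k : Fin K) : Idx K L := Sum.inl k
def x {K L : ℕ} (l : Fin L) : Idx K L := Sum.inr (Sum.inl l)
def y {K L : ℕ} (k : Fin K) : Idx K L := Sum.inr (Sum.inr k)

/-- Conditional mutual information `I(A;B|C)` computed from joint entropy `H`. -/
def CMI {K L : ℕ} (H : Finset (Idx K L) → ℝ) (A B C : Finset (Idx K L)) : ℝ :=
  H (A ∪ C) + H (B ∪ C) - H (A ∪ B ∪ C) - H C

/-- The set of variables `U(D)`. -/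
def Uset {K L : ℕ} (D : Finset (Fin K)) : Finset (Idx K L) := D.image u

/-- The set of all BS variables `X(𝓛)`. -/
def Xall (K L : ℕ) : Finset (Idx K L) := Finset.univ.image x

/-- Total correlation `T(U(D), X(𝓛)) = ∑_{k∈D} H(U_k) + ∑_l H(X_l) - H(U(D),X(𝓛))`. -/
def Tcor {K L : ℕ} (H : Finset (Idx K L) → ℝ) (D : Finset (Fin K)) : ℝ :=
  (∑ k ∈ D, H {u k}) + (∑ l : Fin L, H {x l}) - H (Uset D ∪ Xall K L)

lemma u_not_mem_Xall {K L : ℕ} (k : Fin K) : u k ∉ Xall K L := by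
  simp [Xall, x, u]

lemma u_mem_Uset {K L : ℕ} {D : Finset (Fin K)} {k : Fin K} :
    (u k : Idx K L) ∈ Uset D ↔ k ∈ D := by
  simp [Uset, u]

/-- `I(U_k; X(𝓛))`. -/
def MIX {K L : ℕ} (H : Finset (Idx K L) → ℝ) (k : Fin K) : ℝ :=
  H {u k} + H (Xall K L) - H ({u k} ∪ Xall K L)

lemma lemA {K L : ℕ} (H : Finset (Idx K L) → ℝ)
    (hsub : ∀ A B : Finset (Idx K L), H (A ∪ B) + H (A ∩ B) ≤ H A + H B)
    (D : Finset (Fin K)) (S : Finset (Fin K)) (hdisj : Disjoint S D) :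
    H (Uset (D ∪ S) ∪ Xall K L) ≤ H (Uset D ∪ Xall K L) +
      ∑ k ∈ S, (H {u k} - MIX H k) := by
  classical
  induction S using Finset.induction_on with
  | empty => simp
  | @insert a S ha ih =>
    have hdisjS : Disjoint S D := (Finset.disjoint_insert_left.mp hdisj).2
    have haD : a ∉ D := (Finset.disjoint_insert_left.mp hdisj).1
    have hA : (Uset (D ∪ insert a S) : Finset (Idx K L)) = insert (u a) (Uset (D ∪ S)) := by
      rw [Finset.union_insert]; exact Finset.image_insert _ _ _
    set A : Finset (Idx K L) := Uset (D ∪ S) ∪ Xall K L with hAdef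
    have hmemA : (u a : Idx K L) ∉ A := by
      simp only [hAdef, Finset.mem_union, u_mem_Uset, Finset.mem_union] at *
      rintro ((h | h) | h)
      · exact haD h
      · exact ha h
      · exact u_not_mem_Xall a h
    have hXA : Xall K L ⊆ A := Finset.subset_union_right
    have hunion : A ∪ ({u a} ∪ Xall K L) = insert (u a) A := by
      ext z; simp only [Finset.mem_union, Finset.mem_insert, Finset.mem_singleton]
      constructor
      · rintro (h | h | h) <;> try (first | exact Or.inr h | exact Or.inl h)
        exact Or.inr (hXA h)
      · rintro (h | h)
        · exact Or.inr (Or.inl h)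
        · exact Or.inl h
    have hinter : A ∩ ({u a} ∪ Xall K L) = Xall K L := by
      ext z; simp only [Finset.mem_inter, Finset.mem_union, Finset.mem_singleton]
      constructor
      · rintro ⟨hz, hz' | hz'⟩
        · exact absurd (hz' ▸ hz) hmemA
        · exact hz'
      · intro hz; exact ⟨hXA hz, Or.inr hz⟩
    have hstep := hsub A ({u a} ∪ Xall K L)
    rw [hunion, hinter] at hstep
    have hgoal : Uset (D ∪ insert a S) ∪ Xall K L = insert (u a) A := by
      rw [hA, hAdef, Finset.insert_union]
    rw [hgoal, Finset.sum_insert ha]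
    have := ih hdisjS
    simp only [MIX] at *
    linarith

theorem stmt0 {K L : ℕ} (H : Finset (Idx K L) → ℝ)
    (hzero : H ∅ = 0)
    (hmono : ∀ A B : Finset (Idx K L), A ⊆ B → H A ≤ H B)
    (hsub : ∀ A B : Finset (Idx K L), H (A ∪ B) + H (A ∩ B) ≤ H A + H B)
    (hmarkov : ∀ k : Fin K, CMI H {u k} {y k} (Xall K L) = 0)
    (D : Finset (Fin K)) :
    Tcor H Finset.univ - Tcor H D -
      ∑ k ∈ Finset.univ \ D, CMI H {u k} {y k} ∅ ≥ 0 := by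
  classical
  -- Step 1: each CMI term is at most MIX
  have hterm : ∀ k : Fin K, CMI H {u k} {y k} ∅ ≤ MIX H k := by
    intro k
    have hm := hmarkov k
    simp only [CMI, Finset.union_empty, hzero, sub_zero] at hm ⊢
    -- I(U;Y) ≤ I(U; {Y} ∪ X) via submodularity
    have huy : (u k : Idx K L) ≠ y k := by simp [u, y]
    have hs := hsub ({u k} ∪ {y k}) ({y k} ∪ Xall K L)
    have hun : ({u k} ∪ {y k}) ∪ ({y k} ∪ Xall K L) = {u k} ∪ {y k} ∪ Xall K L := by
      ext z; simp only [Finset.mem_union]; tauto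
    have hin : ({u k} ∪ {y k}) ∩ ({y k} ∪ Xall K L) = ({y k} : Finset (Idx K L)) := by
      ext z
      simp only [Finset.mem_inter, Finset.mem_union, Finset.mem_singleton]
      constructor
      · rintro ⟨hz | hz, hz' | hz'⟩
        · exact absurd (hz ▸ hz' : (u k : Idx K L) = y k) huy
        · exact absurd (hz ▸ hz') (u_not_mem_Xall k)
        · exact hz
        · exact hz
      · intro hz; exact ⟨Or.inr hz, Or.inl hz⟩
    rw [hun, hin] at hs
    simp only [MIX]
    linarith
  -- Step 2: the telescoping/submodularity bound
  have hU : D ∪ (Finset.univ \ D) = Finset.univ :=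
    Finset.union_sdiff_of_subset (Finset.subset_univ D)
  have hkey := lemA H hsub D (Finset.univ \ D) Finset.sdiff_disjoint
  rw [hU] at hkey
  have hsum : ∑ k ∈ Finset.univ \ D, CMI H {u k} {y k} ∅ ≤
      ∑ k ∈ Finset.univ \ D, MIX H k :=
    Finset.sum_le_sum fun k _ => hterm k
  have hsplit : (∑ k ∈ Finset.univ \ D, H ({u k} : Finset (Idx K L))) +
      ∑ k ∈ D, H ({u k} : Finset (Idx K L)) = ∑ k : Fin K, H {u k} :=
    Finset.sum_sdiff (Finset.subset_univ D)
  have hsumsub : ∑ k ∈ Finset.univ \ D, (H ({u k} : Finset (Idx K L)) - MIX H k) =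
      (∑ k ∈ Finset.univ \ D, H ({u k} : Finset (Idx K L))) -
        ∑ k ∈ Finset.univ \ D, MIX H k := Finset.sum_sub_distrib _ _
  simp only [Tcor]
  rw [hsumsub] at hkey
  linarith
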